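/- For every n ≥ 0, the polynomial J_{2n+1}(x) has degree n and is symmetric: writing J_{2n+1}(x) = Σ_{i=0}^{n} c_i x^i, one has c_i = c_{n−i} for all 0 ≤ i ≤ n. -/
import Mathlib


open Finset Polynomial

/-- Number of odd cycle peaks of a permutation of `[n]` (the element `i : Fin n`
represents the value `i+1 ∈ {1,…,n}`): values `v` with `π⁻¹(v) < v` and `π(v) < v`
whose label is odd. -/
def cpko (n : ℕ) (π : Equiv.Perm (Fin n)) : ℕ :=
  (Finset.univ.filter fun i : Fin n => π.symm i < i ∧ π i < i ∧ Odd ((i : ℕ) + 1)).card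

/-- Number of even cycle peaks of a permutation of `[n]`. -/
def cpke (n : ℕ) (π : Equiv.Perm (Fin n)) : ℕ :=
  (Finset.univ.filter fun i : Fin n => π.symm i < i ∧ π i < i ∧ Even ((i : ℕ) + 1)).card

/-- `Jodd n = J_{2n+1}(x) = Σ_{π ∈ S_{2n+1}, cpk^o(π)=0} x^{cpk^e(π)}`. -/
noncomputable def Jodd (n : ℕ) : Polynomial ℤ :=
  ∑ π ∈ Finset.univ.filter (fun π : Equiv.Perm (Fin (2 * n + 1)) => cpko (2 * n + 1) π = 0),
    X ^ cpke (2 * n + 1) π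

namespace JoddProof

open Equiv Fin

/-- cycle peak predicate -/
def pk {N : ℕ} (π : Perm (Fin N)) (i : Fin N) : Prop := π.symm i < i ∧ π i < i

instance {N : ℕ} (π : Perm (Fin N)) (i : Fin N) : Decidable (pk π i) := by
  unfold pk; infer_instance

/-- count of cycle peaks whose (1-based) value satisfies p -/
def cnt {N : ℕ} (π : Perm (Fin N)) (p : ℕ → Prop) [DecidablePred p] : ℕ :=
  (Finset.univ.filter fun i : Fin N => pk π i ∧ p ((i : ℕ) + 1)).card

lemma cpke_eq_cnt {N : ℕ} (π : Perm (Fin N)) : cpke N π = cnt π Even := by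
  unfold cpke cnt pk
  congr 1
  apply Finset.filter_congr
  intro i _
  tauto

lemma cpko_eq_cnt {N : ℕ} (π : Perm (Fin N)) : cpko N π = cnt π Odd := by
  unfold cpko cnt pk
  congr 1
  apply Finset.filter_congr
  intro i _
  tauto

/-- if a is a peak then π a is not -/
lemma not_pk_apply {N : ℕ} (π : Perm (Fin N)) (a : Fin N) (h : pk π a) : ¬ pk π (π a) := by
  rintro ⟨h1, _⟩
  rw [Equiv.symm_apply_apply] at h1
  exact absurd h.2 (not_lt.2 h1.le)

section
variable {N : ℕ}

/-- Insert a new largest element `N+1` into a permutation of `[N]`: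
`none` means insert as a fixed point; `some b` means insert just before `b`
in its cycle (new element maps to `b`). -/
def insEquiv (N : ℕ) : Option (Fin N) × Perm (Fin N) ≃ Perm (Fin (N+1)) :=
  Equiv.Perm.decomposeOption.symm.trans (finSuccEquivLast.symm.permCongr)

lemma insEquiv_apply (ob : Option (Fin N)) (π : Perm (Fin N)) (x : Fin (N+1)) :
    insEquiv N (ob, π) x
      = finSuccEquivLast.symm ((Equiv.swap none ob) ((finSuccEquivLast x).map π)) := by
  rfl

-- value lemmas for none
lemma ins_none_castSucc (π : Perm (Fin N)) (x : Fin N) :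
    insEquiv N (none, π) (castSucc x) = castSucc (π x) := by
  rw [insEquiv_apply]
  simp

lemma ins_none_last (π : Perm (Fin N)) :
    insEquiv N (none, π) (last N) = last N := by
  rw [insEquiv_apply]
  simp

-- value lemmas for some b
lemma ins_some_castSucc (π : Perm (Fin N)) (b x : Fin N) :
    insEquiv N (some b, π) (castSucc x)
      = if π x = b then last N else castSucc (π x) := by
  rw [insEquiv_apply]
  rcases eq_or_ne (π x) b with h | h
  · simp [h, Equiv.swap_apply_right]
  · simp [h, Equiv.swap_apply_of_ne_of_ne, (Option.some_injective _).ne h]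

lemma ins_some_last (π : Perm (Fin N)) (b : Fin N) :
    insEquiv N (some b, π) (last N) = castSucc b := by
  rw [insEquiv_apply]
  simp [Equiv.swap_apply_left]

section
variable {N : ℕ}
-- inverse value lemmas
lemma ins_none_symm_castSucc (π : Perm (Fin N)) (x : Fin N) :
    (insEquiv N (none, π)).symm (castSucc x) = castSucc (π.symm x) := by
  rw [Equiv.symm_apply_eq, ins_none_castSucc, Equiv.apply_symm_apply]

lemma ins_none_symm_last (π : Perm (Fin N)) :
    (insEquiv N (none, π)).symm (last N) = last N := by
  rw [Equiv.symm_apply_eq, ins_none_last]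

lemma ins_some_symm_last (π : Perm (Fin N)) (b : Fin N) :
    (insEquiv N (some b, π)).symm (last N) = castSucc (π.symm b) := by
  rw [Equiv.symm_apply_eq, ins_some_castSucc]
  simp

lemma ins_some_symm_castSucc_self (π : Perm (Fin N)) (b : Fin N) :
    (insEquiv N (some b, π)).symm (castSucc b) = last N := by
  rw [Equiv.symm_apply_eq, ins_some_last]

lemma ins_some_symm_castSucc (π : Perm (Fin N)) (b y : Fin N) (h : y ≠ b) :
    (insEquiv N (some b, π)).symm (castSucc y) = castSucc (π.symm y) := by
  rw [Equiv.symm_apply_eq, ins_some_castSucc]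
  simp [Equiv.apply_symm_apply, h]

-- pk transfer lemmas
lemma pk_ins_none_castSucc (π : Perm (Fin N)) (x : Fin N) :
    pk (insEquiv N (none, π)) (castSucc x) ↔ pk π x := by
  unfold pk
  rw [ins_none_castSucc, ins_none_symm_castSucc, castSucc_lt_castSucc_iff,
    castSucc_lt_castSucc_iff]

lemma pk_ins_none_last (π : Perm (Fin N)) : ¬ pk (insEquiv N (none, π)) (last N) := by
  unfold pk
  rw [ins_none_last]
  simp

lemma pk_ins_some_last (π : Perm (Fin N)) (b : Fin N) :
    pk (insEquiv N (some b, π)) (last N) := by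
  unfold pk
  rw [ins_some_last, ins_some_symm_last]
  exact ⟨castSucc_lt_last _, castSucc_lt_last _⟩

lemma pk_ins_some_castSucc (π : Perm (Fin N)) (b x : Fin N) :
    pk (insEquiv N (some b, π)) (castSucc x) ↔ pk π x ∧ x ≠ π.symm b ∧ x ≠ b := by
  unfold pk
  rcases eq_or_ne x (π.symm b) with rfl | ha
  · rw [ins_some_castSucc, if_pos (π.apply_symm_apply b)]
    have hf : ¬ (last N < castSucc (π.symm b)) := not_lt.2 (castSucc_lt_last _).le
    constructor
    · rintro ⟨-, h⟩; exact absurd h hf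
    · rintro ⟨-, h, -⟩; exact absurd rfl h
  · rcases eq_or_ne x b with rfl | hb
    · rw [ins_some_symm_castSucc_self]
      have hf : ¬ (last N < castSucc x) := not_lt.2 (castSucc_lt_last _).le
      constructor
      · rintro ⟨h, -⟩; exact absurd h hf
      · rintro ⟨-, -, h⟩; exact absurd rfl h
    · rw [ins_some_castSucc, ins_some_symm_castSucc π b x hb, if_neg]
      · rw [castSucc_lt_castSucc_iff, castSucc_lt_castSucc_iff]
        simp [ha, hb]
      · intro h
        exact ha (by rw [← h, Equiv.symm_apply_apply])
end
section
variable {N : ℕ}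
/-- card of a filter on `Fin (N+1)` splits into the `last` part and the `castSucc` part. -/
lemma card_filter_succ (q : Fin (N+1) → Prop) [DecidablePred q] :
    (Finset.univ.filter q).card
      = (if q (last N) then 1 else 0)
        + (Finset.univ.filter fun x : Fin N => q (castSucc x)).card := by
  classical
  rw [Fin.univ_castSuccEmb, Finset.filter_cons, apply_ite Finset.card, Finset.card_cons,
    Finset.filter_map, Finset.card_map]
  split_ifs with h <;> [rw [add_comm]; rw [zero_add]] <;> rfl

variable (p : ℕ → Prop) [DecidablePred p]

lemma cnt_ins_none (π : Perm (Fin N)) : cnt (insEquiv N (none, π)) p = cnt π p := by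
  unfold cnt
  rw [card_filter_succ]
  rw [if_neg (by simp [pk_ins_none_last π])]
  rw [zero_add]
  congr 1
  apply Finset.filter_congr
  intro x _
  rw [Fin.coe_castSucc, pk_ins_none_castSucc]

/-- case A : neither b nor π⁻¹ b is a peak -/
lemma cnt_ins_some_A (π : Perm (Fin N)) (b : Fin N) (hb : ¬ pk π b) (ha : ¬ pk π (π.symm b)) :
    cnt (insEquiv N (some b, π)) p = (if p (N+1) then 1 else 0) + cnt π p := by
  unfold cnt
  rw [card_filter_succ]
  congr 1
  · simp only [pk_ins_some_last, true_and, Fin.val_last]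
  · congr 1
    apply Finset.filter_congr
    intro x _
    simp only [Fin.coe_castSucc, pk_ins_some_castSucc]
    constructor
    · rintro ⟨⟨h, -, -⟩, hp⟩; exact ⟨h, hp⟩
    · rintro ⟨h, hp⟩
      exact ⟨⟨h, fun e => ha (e ▸ h), fun e => hb (e ▸ h)⟩, hp⟩

/-- case B : b is a peak -/
lemma cnt_ins_some_B (π : Perm (Fin N)) (b : Fin N) (hb : pk π b) :
    cnt (insEquiv N (some b, π)) p + (if p ((b:ℕ)+1) then 1 else 0)
      = cnt π p + (if p (N+1) then 1 else 0) := by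
  have ha : ¬ pk π (π.symm b) := fun h => (not_pk_apply π _ h) (by simpa using hb)
  unfold cnt
  rw [card_filter_succ]
  have hset : (Finset.univ.filter fun x : Fin N =>
      pk (insEquiv N (some b, π)) (castSucc x) ∧ p ((castSucc x : ℕ) + 1))
      = (Finset.univ.filter fun x : Fin N => pk π x ∧ p ((x:ℕ)+1)).erase b := by
    ext x
    simp only [Finset.mem_filter, Finset.mem_erase, Finset.mem_univ, true_and,
      pk_ins_some_castSucc, Fin.coe_castSucc]
    constructor
    · rintro ⟨⟨h, -, hxb⟩, hp⟩; exact ⟨hxb, h, hp⟩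
    · rintro ⟨hxb, h, hp⟩
      exact ⟨⟨h, fun e => ha (e ▸ h), hxb⟩, hp⟩
  rw [hset]
  simp only [pk_ins_some_last, true_and, Fin.val_last]
  by_cases hp : p ((b:ℕ)+1)
  · rw [if_pos hp]
    have hmem : b ∈ Finset.univ.filter fun x : Fin N => pk π x ∧ p ((x:ℕ)+1) := by
      simp [hb, hp]
    have := Finset.card_erase_add_one hmem
    omega
  · rw [if_neg hp]
    have hmem : b ∉ Finset.univ.filter fun x : Fin N => pk π x ∧ p ((x:ℕ)+1) := by
      simp [hp]
    rw [Finset.erase_eq_of_notMem hmem]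
    omega

/-- case C : π⁻¹ b is a peak -/
lemma cnt_ins_some_C (π : Perm (Fin N)) (b : Fin N) (ha : pk π (π.symm b)) :
    cnt (insEquiv N (some b, π)) p + (if p ((π.symm b:ℕ)+1) then 1 else 0)
      = cnt π p + (if p (N+1) then 1 else 0) := by
  have hb : ¬ pk π b := by
    have := not_pk_apply π (π.symm b) ha
    rwa [Equiv.apply_symm_apply] at this
  unfold cnt
  rw [card_filter_succ]
  have hset : (Finset.univ.filter fun x : Fin N =>
      pk (insEquiv N (some b, π)) (castSucc x) ∧ p ((castSucc x : ℕ) + 1))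
      = (Finset.univ.filter fun x : Fin N => pk π x ∧ p ((x:ℕ)+1)).erase (π.symm b) := by
    ext x
    simp only [Finset.mem_filter, Finset.mem_erase, Finset.mem_univ, true_and,
      pk_ins_some_castSucc, Fin.coe_castSucc]
    constructor
    · rintro ⟨⟨h, hxa, -⟩, hp⟩; exact ⟨hxa, h, hp⟩
    · rintro ⟨hxa, h, hp⟩
      exact ⟨⟨h, hxa, fun e => hb (e ▸ h)⟩, hp⟩
  rw [hset]
  simp only [pk_ins_some_last, true_and, Fin.val_last]
  by_cases hp : p ((π.symm b:ℕ)+1)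
  · rw [if_pos hp]
    have hmem : π.symm b ∈ Finset.univ.filter fun x : Fin N => pk π x ∧ p ((x:ℕ)+1) := by
      simp [ha, hp]
    have := Finset.card_erase_add_one hmem
    omega
  · rw [if_neg hp]
    have hmem : π.symm b ∉ Finset.univ.filter fun x : Fin N => pk π x ∧ p ((x:ℕ)+1) := by
      simp [hp]
    rw [Finset.erase_eq_of_notMem hmem]
    omega
end
section
variable {N : ℕ}
variable (π : Perm (Fin N)) (p : ℕ → Prop) [DecidablePred p]
lemma pk_symm_not_pk {b : Fin N} (h : pk π (π.symm b)) : ¬ pk π b := by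
  intro hb
  exact not_pk_apply π (π.symm b) h (by rwa [Equiv.apply_symm_apply])

lemma card_classT :
    (Finset.univ.filter fun b : Fin N =>
      ¬ pk π b ∧ (pk π (π.symm b) ∧ p ((π.symm b : ℕ) + 1))).card = cnt π p := by
  have h1 : (Finset.univ.filter fun b : Fin N =>
      ¬ pk π b ∧ (pk π (π.symm b) ∧ p ((π.symm b : ℕ) + 1)))
      = (Finset.univ.filter fun b : Fin N => pk π (π.symm b) ∧ p ((π.symm b : ℕ) + 1)) := by
    apply Finset.filter_congr
    intro b _
    constructor
    · rintro ⟨-, h⟩; exact h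
    · rintro ⟨h1, h2⟩
      exact ⟨pk_symm_not_pk π h1, h1, h2⟩
  rw [h1]
  unfold cnt
  apply Finset.card_bij' (fun b _ => π.symm b) (fun x _ => π x)
  · intro b hb
    simp only [Finset.mem_filter, Finset.mem_univ, true_and] at hb ⊢
    exact hb
  · intro x hx
    simp only [Finset.mem_filter, Finset.mem_univ, true_and,
      Equiv.symm_apply_apply] at hx ⊢
    exact hx
  · intro b _; exact Equiv.apply_symm_apply π b
  · intro x _; exact Equiv.symm_apply_apply π x

lemma cnt_even_add_odd :
    cnt π Even + cnt π Odd = (Finset.univ.filter fun b : Fin N => pk π b).card := by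
  unfold cnt
  have he : (Finset.univ.filter fun i : Fin N => pk π i ∧ Even ((i:ℕ)+1))
      = (Finset.univ.filter fun i : Fin N => pk π i).filter (fun i : Fin N => Even ((i:ℕ)+1)) := by
    rw [Finset.filter_filter]
  have ho : (Finset.univ.filter fun i : Fin N => pk π i ∧ Odd ((i:ℕ)+1))
      = (Finset.univ.filter fun i : Fin N => pk π i).filter (fun i : Fin N => ¬ Even ((i:ℕ)+1)) := by
    rw [Finset.filter_filter]
    apply Finset.filter_congr
    intro i _
    simp [Nat.not_even_iff_odd]
  rw [he, ho, Finset.card_filter_add_card_filter_not]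

lemma card_classR :
    (Finset.univ.filter fun b : Fin N => ¬ pk π b ∧ ¬ pk π (π.symm b)).card
      + (cnt π Even + cnt π Odd) + (cnt π Even + cnt π Odd) = N := by
  classical
  have h1 := cnt_even_add_odd π
  have hTe := card_classT π Even
  have hTo := card_classT π Odd
  -- partition of filter (¬pk ∧ pk a) by parity of a
  have h2 : (Finset.univ.filter fun b : Fin N =>
        ¬ pk π b ∧ (pk π (π.symm b) ∧ Even ((π.symm b : ℕ) + 1))).card
      + (Finset.univ.filter fun b : Fin N =>
        ¬ pk π b ∧ (pk π (π.symm b) ∧ Odd ((π.symm b : ℕ) + 1))).card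
      = (Finset.univ.filter fun b : Fin N => ¬ pk π b ∧ pk π (π.symm b)).card := by
    have he : (Finset.univ.filter fun b : Fin N =>
        ¬ pk π b ∧ (pk π (π.symm b) ∧ Even ((π.symm b : ℕ) + 1)))
        = (Finset.univ.filter fun b : Fin N => ¬ pk π b ∧ pk π (π.symm b)).filter
            (fun b => Even ((π.symm b : ℕ) + 1)) := by
      rw [Finset.filter_filter]
      apply Finset.filter_congr
      intro b _
      tauto
    have ho : (Finset.univ.filter fun b : Fin N =>
        ¬ pk π b ∧ (pk π (π.symm b) ∧ Odd ((π.symm b : ℕ) + 1)))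
        = (Finset.univ.filter fun b : Fin N => ¬ pk π b ∧ pk π (π.symm b)).filter
            (fun b => ¬ Even ((π.symm b : ℕ) + 1)) := by
      rw [Finset.filter_filter]
      apply Finset.filter_congr
      intro b _
      simp only [Nat.not_even_iff_odd]
      tauto
    rw [he, ho, Finset.card_filter_add_card_filter_not]
  -- partition of filter (¬pk) by pk a
  have h3 : (Finset.univ.filter fun b : Fin N => ¬ pk π b ∧ pk π (π.symm b)).card
      + (Finset.univ.filter fun b : Fin N => ¬ pk π b ∧ ¬ pk π (π.symm b)).card
      = (Finset.univ.filter fun b : Fin N => ¬ pk π b).card := by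
    have he : (Finset.univ.filter fun b : Fin N => ¬ pk π b ∧ pk π (π.symm b))
        = (Finset.univ.filter fun b : Fin N => ¬ pk π b).filter (fun b => pk π (π.symm b)) := by
      rw [Finset.filter_filter]
    have ho : (Finset.univ.filter fun b : Fin N => ¬ pk π b ∧ ¬ pk π (π.symm b))
        = (Finset.univ.filter fun b : Fin N => ¬ pk π b).filter
            (fun b => ¬ pk π (π.symm b)) := by
      rw [Finset.filter_filter]
    rw [he, ho, Finset.card_filter_add_card_filter_not]
  have h4 : (Finset.univ.filter fun b : Fin N => pk π b).card
      + (Finset.univ.filter fun b : Fin N => ¬ pk π b).card = N := by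
    rw [Finset.card_filter_add_card_filter_not, Finset.card_univ, Fintype.card_fin]
  omega
end
section
variable {N : ℕ}
/-- the inner sum over insertion positions, case where the new value N+1 is even -/
lemma innerE (hN : Even (N+1)) (j : ℕ) (π : Perm (Fin N)) :
    (if cpko (N+1) (insEquiv N (none, π)) = j
        then (X:Polynomial ℤ) ^ cpke (N+1) (insEquiv N (none, π)) else 0)
     + ∑ b : Fin N, (if cpko (N+1) (insEquiv N (some b, π)) = j
        then (X:Polynomial ℤ) ^ cpke (N+1) (insEquiv N (some b, π)) else 0)
    = (if cpko N π = j then ((X:Polynomial ℤ)^(cpke N π)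
          + (2 * cnt π Even) • (X:Polynomial ℤ)^(cpke N π)
          + C ((N:ℤ) - 2*(cnt π Even) - 2*(cnt π Odd)) * X^(cpke N π + 1)) else 0)
      + (if cpko N π = j + 1 then (2*(cnt π Odd)) • (X:Polynomial ℤ)^(cpke N π + 1) else 0) := by
  classical
  have hNo : ¬ Odd (N+1) := by simpa [Nat.not_odd_iff_even] using hN
  set e := cnt π Even with he
  set o := cnt π Odd with ho
  -- value of the `none` term
  have hnone : (if cpko (N+1) (insEquiv N (none, π)) = j
      then (X:Polynomial ℤ) ^ cpke (N+1) (insEquiv N (none, π)) else 0)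
      = (if o = j then (X:Polynomial ℤ)^e else 0) := by
    rw [cpko_eq_cnt, cpke_eq_cnt, cnt_ins_none, cnt_ins_none, ← he, ← ho]
  -- value of `some b` terms by class
  have hvalB : ∀ b : Fin N, pk π b → Even ((b:ℕ)+1) →
      (if cpko (N+1) (insEquiv N (some b, π)) = j
        then (X:Polynomial ℤ) ^ cpke (N+1) (insEquiv N (some b, π)) else 0)
      = (if o = j then (X:Polynomial ℤ)^e else 0) := by
    intro b hb hbe
    have h1 := cnt_ins_some_B Even π b hb
    rw [if_pos hbe, if_pos hN] at h1
    have h2 := cnt_ins_some_B Odd π b hb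
    rw [if_neg (by simpa [Nat.not_odd_iff_even] using hbe), if_neg hNo, add_zero, add_zero] at h2
    rw [cpko_eq_cnt, cpke_eq_cnt, h2, (by omega : cnt (insEquiv N (some b, π)) Even = e), ← ho]
  have hvalBo : ∀ b : Fin N, pk π b → ¬ Even ((b:ℕ)+1) →
      (if cpko (N+1) (insEquiv N (some b, π)) = j
        then (X:Polynomial ℤ) ^ cpke (N+1) (insEquiv N (some b, π)) else 0)
      = (if o = j + 1 then (X:Polynomial ℤ)^(e+1) else 0) := by
    intro b hb hbe
    have h1 := cnt_ins_some_B Even π b hb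
    rw [if_neg hbe, if_pos hN, add_zero] at h1
    have h2 := cnt_ins_some_B Odd π b hb
    rw [if_pos (Nat.not_even_iff_odd.mp hbe), if_neg hNo, add_zero] at h2
    rw [cpko_eq_cnt, cpke_eq_cnt, h1, ← he]
    have : cnt (insEquiv N (some b, π)) Odd = j ↔ o = j + 1 := by omega
    by_cases hj : o = j + 1
    · rw [if_pos (this.mpr hj), if_pos hj]
    · rw [if_neg (fun hh => hj (this.mp hh)), if_neg hj]
  have hvalC : ∀ b : Fin N, pk π (π.symm b) → Even ((π.symm b:ℕ)+1) →
      (if cpko (N+1) (insEquiv N (some b, π)) = j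
        then (X:Polynomial ℤ) ^ cpke (N+1) (insEquiv N (some b, π)) else 0)
      = (if o = j then (X:Polynomial ℤ)^e else 0) := by
    intro b hb hbe
    have h1 := cnt_ins_some_C Even π b hb
    rw [if_pos hbe, if_pos hN] at h1
    have h2 := cnt_ins_some_C Odd π b hb
    rw [if_neg (by simpa [Nat.not_odd_iff_even] using hbe), if_neg hNo, add_zero, add_zero] at h2
    rw [cpko_eq_cnt, cpke_eq_cnt, h2, (by omega : cnt (insEquiv N (some b, π)) Even = e), ← ho]
  have hvalCo : ∀ b : Fin N, pk π (π.symm b) → ¬ Even ((π.symm b:ℕ)+1) →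
      (if cpko (N+1) (insEquiv N (some b, π)) = j
        then (X:Polynomial ℤ) ^ cpke (N+1) (insEquiv N (some b, π)) else 0)
      = (if o = j + 1 then (X:Polynomial ℤ)^(e+1) else 0) := by
    intro b hb hbe
    have h1 := cnt_ins_some_C Even π b hb
    rw [if_neg hbe, if_pos hN, add_zero] at h1
    have h2 := cnt_ins_some_C Odd π b hb
    rw [if_pos (Nat.not_even_iff_odd.mp hbe), if_neg hNo, add_zero] at h2
    rw [cpko_eq_cnt, cpke_eq_cnt, h1, ← he]
    have : cnt (insEquiv N (some b, π)) Odd = j ↔ o = j + 1 := by omega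
    by_cases hj : o = j + 1
    · rw [if_pos (this.mpr hj), if_pos hj]
    · rw [if_neg (fun hh => hj (this.mp hh)), if_neg hj]
  have hvalA : ∀ b : Fin N, ¬ pk π b → ¬ pk π (π.symm b) →
      (if cpko (N+1) (insEquiv N (some b, π)) = j
        then (X:Polynomial ℤ) ^ cpke (N+1) (insEquiv N (some b, π)) else 0)
      = (if o = j then (X:Polynomial ℤ)^(e+1) else 0) := by
    intro b hb ha
    have h1 := cnt_ins_some_A Even π b hb ha
    rw [if_pos hN] at h1
    have h2 := cnt_ins_some_A Odd π b hb ha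
    rw [if_neg hNo, zero_add] at h2
    rw [cpko_eq_cnt, cpke_eq_cnt, h1, h2, ← he, ← ho, add_comm 1 e]
  -- helper for nsmul
  have nsmul_eq_C_mul : ∀ (n : ℕ) (q : Polynomial ℤ), n • q = C (n:ℤ) * q := by
    intro n q
    rw [nsmul_eq_mul]
    norm_cast
  -- split the b-sum into the five classes
  have hsum : ∑ b : Fin N, (if cpko (N+1) (insEquiv N (some b, π)) = j
        then (X:Polynomial ℤ) ^ cpke (N+1) (insEquiv N (some b, π)) else 0)
      = (e • (if o = j then (X:Polynomial ℤ)^e else 0)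
          + o • (if o = j+1 then (X:Polynomial ℤ)^(e+1) else 0))
        + ((e • (if o = j then (X:Polynomial ℤ)^e else 0)
          + o • (if o = j+1 then (X:Polynomial ℤ)^(e+1) else 0))
        + ((Finset.univ.filter fun b : Fin N => ¬ pk π b ∧ ¬ pk π (π.symm b)).card
            • (if o = j then (X:Polynomial ℤ)^(e+1) else 0))) := by
    rw [← Finset.sum_filter_add_sum_filter_not Finset.univ (fun b => pk π b)]
    have hBe : ∑ b ∈ (Finset.univ.filter (fun b => pk π b)).filter
        (fun b : Fin N => Even ((b:ℕ)+1)), (if cpko (N+1) (insEquiv N (some b, π)) = j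
          then (X:Polynomial ℤ) ^ cpke (N+1) (insEquiv N (some b, π)) else 0)
        = e • (if o = j then (X:Polynomial ℤ)^e else 0) := by
      have hv : ∀ b ∈ (Finset.univ.filter (fun b => pk π b)).filter
          (fun b : Fin N => Even ((b:ℕ)+1)), (if cpko (N+1) (insEquiv N (some b, π)) = j
            then (X:Polynomial ℤ) ^ cpke (N+1) (insEquiv N (some b, π)) else 0)
          = (if o = j then (X:Polynomial ℤ)^e else 0) := by
        intro b hb
        simp only [Finset.mem_filter, Finset.mem_univ, true_and] at hb
        exact hvalB b hb.1 hb.2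
      rw [Finset.sum_congr rfl hv, Finset.sum_const]
      congr 1
      rw [Finset.filter_filter, he]
      rfl
    have hBo : ∑ b ∈ (Finset.univ.filter (fun b => pk π b)).filter
        (fun b : Fin N => ¬ Even ((b:ℕ)+1)), (if cpko (N+1) (insEquiv N (some b, π)) = j
          then (X:Polynomial ℤ) ^ cpke (N+1) (insEquiv N (some b, π)) else 0)
        = o • (if o = j+1 then (X:Polynomial ℤ)^(e+1) else 0) := by
      have hv : ∀ b ∈ (Finset.univ.filter (fun b => pk π b)).filter
          (fun b : Fin N => ¬ Even ((b:ℕ)+1)), (if cpko (N+1) (insEquiv N (some b, π)) = j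
            then (X:Polynomial ℤ) ^ cpke (N+1) (insEquiv N (some b, π)) else 0)
          = (if o = j+1 then (X:Polynomial ℤ)^(e+1) else 0) := by
        intro b hb
        simp only [Finset.mem_filter, Finset.mem_univ, true_and] at hb
        exact hvalBo b hb.1 hb.2
      rw [Finset.sum_congr rfl hv, Finset.sum_const]
      congr 1
      rw [Finset.filter_filter, ho]
      unfold cnt
      congr 1
      apply Finset.filter_congr
      intro b _
      rw [Nat.not_even_iff_odd]
    have hCe : ∑ b ∈ ((Finset.univ.filter (fun b => ¬ pk π b)).filter
          (fun b => pk π (π.symm b))).filter (fun b : Fin N => Even ((π.symm b : ℕ)+1)),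
        (if cpko (N+1) (insEquiv N (some b, π)) = j
          then (X:Polynomial ℤ) ^ cpke (N+1) (insEquiv N (some b, π)) else 0)
        = e • (if o = j then (X:Polynomial ℤ)^e else 0) := by
      have hv : ∀ b ∈ ((Finset.univ.filter (fun b => ¬ pk π b)).filter
          (fun b => pk π (π.symm b))).filter (fun b : Fin N => Even ((π.symm b : ℕ)+1)),
          (if cpko (N+1) (insEquiv N (some b, π)) = j
            then (X:Polynomial ℤ) ^ cpke (N+1) (insEquiv N (some b, π)) else 0)
          = (if o = j then (X:Polynomial ℤ)^e else 0) := by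
        intro b hb
        simp only [Finset.mem_filter, Finset.mem_univ, true_and] at hb
        exact hvalC b hb.1.2 hb.2
      rw [Finset.sum_congr rfl hv, Finset.sum_const]
      congr 1
      rw [Finset.filter_filter, Finset.filter_filter, he, ← card_classT π Even]
    have hCo : ∑ b ∈ ((Finset.univ.filter (fun b => ¬ pk π b)).filter
          (fun b => pk π (π.symm b))).filter (fun b : Fin N => ¬ Even ((π.symm b : ℕ)+1)),
        (if cpko (N+1) (insEquiv N (some b, π)) = j
          then (X:Polynomial ℤ) ^ cpke (N+1) (insEquiv N (some b, π)) else 0)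
        = o • (if o = j+1 then (X:Polynomial ℤ)^(e+1) else 0) := by
      have hv : ∀ b ∈ ((Finset.univ.filter (fun b => ¬ pk π b)).filter
          (fun b => pk π (π.symm b))).filter (fun b : Fin N => ¬ Even ((π.symm b : ℕ)+1)),
          (if cpko (N+1) (insEquiv N (some b, π)) = j
            then (X:Polynomial ℤ) ^ cpke (N+1) (insEquiv N (some b, π)) else 0)
          = (if o = j+1 then (X:Polynomial ℤ)^(e+1) else 0) := by
        intro b hb
        simp only [Finset.mem_filter, Finset.mem_univ, true_and] at hb
        exact hvalCo b hb.1.2 hb.2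
      rw [Finset.sum_congr rfl hv, Finset.sum_const]
      congr 1
      rw [Finset.filter_filter, Finset.filter_filter, ho, ← card_classT π Odd]
      congr 1
      apply Finset.filter_congr
      intro b _
      rw [Nat.not_even_iff_odd]
    have hA : ∑ b ∈ (Finset.univ.filter (fun b => ¬ pk π b)).filter
        (fun b => ¬ pk π (π.symm b)), (if cpko (N+1) (insEquiv N (some b, π)) = j
          then (X:Polynomial ℤ) ^ cpke (N+1) (insEquiv N (some b, π)) else 0)
        = (Finset.univ.filter fun b : Fin N => ¬ pk π b ∧ ¬ pk π (π.symm b)).card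
            • (if o = j then (X:Polynomial ℤ)^(e+1) else 0) := by
      have hv : ∀ b ∈ (Finset.univ.filter (fun b => ¬ pk π b)).filter
          (fun b => ¬ pk π (π.symm b)), (if cpko (N+1) (insEquiv N (some b, π)) = j
            then (X:Polynomial ℤ) ^ cpke (N+1) (insEquiv N (some b, π)) else 0)
          = (if o = j then (X:Polynomial ℤ)^(e+1) else 0) := by
        intro b hb
        simp only [Finset.mem_filter, Finset.mem_univ, true_and] at hb
        exact hvalA b hb.1 hb.2
      rw [Finset.sum_congr rfl hv, Finset.sum_const]
      congr 2
      rw [Finset.filter_filter]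
    rw [← Finset.sum_filter_add_sum_filter_not
      (Finset.univ.filter (fun b => pk π b)) (fun b : Fin N => Even ((b:ℕ)+1)),
      ← Finset.sum_filter_add_sum_filter_not
      (Finset.univ.filter (fun b => ¬ pk π b)) (fun b => pk π (π.symm b)),
      ← Finset.sum_filter_add_sum_filter_not
      ((Finset.univ.filter (fun b => ¬ pk π b)).filter (fun b => pk π (π.symm b)))
      (fun b : Fin N => Even ((π.symm b : ℕ)+1)),
      hBe, hBo, hCe, hCo, hA]
  rw [cpko_eq_cnt π, cpke_eq_cnt π, ← he, ← ho, hnone, hsum]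
  have hR : (((Finset.univ.filter fun b : Fin N =>
      ¬ pk π b ∧ ¬ pk π (π.symm b)).card : ℕ) : ℤ) = (N:ℤ) - 2*e - 2*o := by
    have := card_classR π
    rw [← he, ← ho] at this
    push_cast
    omega
  by_cases h1 : o = j
  · have h2 : ¬ (o = j + 1) := by omega
    simp only [if_pos h1, if_neg h2, smul_zero, add_zero, zero_add]
    rw [nsmul_eq_C_mul _ ((X:Polynomial ℤ)^(e+1)), hR]
    rw [nsmul_eq_C_mul, nsmul_eq_C_mul]
    push_cast
    simp only [C_mul, C_add, C_sub, map_ofNat]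
    ring
  · by_cases h2 : o = j + 1
    · simp only [if_neg h1, if_pos h2, smul_zero, add_zero, zero_add]
      rw [nsmul_eq_C_mul, nsmul_eq_C_mul]
      push_cast
      simp only [C_mul, C_add, C_sub, map_ofNat]
      ring
    · simp only [if_neg h1, if_neg h2, smul_zero, add_zero, zero_add]
end
section
variable {N : ℕ}
/-- the inner sum over insertion positions, case where the new value N+1 is odd -/
lemma innerO (hN : Odd (N+1)) (j : ℕ) (π : Perm (Fin N)) :
    (if cpko (N+1) (insEquiv N (none, π)) = j
        then (X:Polynomial ℤ) ^ cpke (N+1) (insEquiv N (none, π)) else 0)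
     + ∑ b : Fin N, (if cpko (N+1) (insEquiv N (some b, π)) = j
        then (X:Polynomial ℤ) ^ cpke (N+1) (insEquiv N (some b, π)) else 0)
    = (if cpko N π = j then ((X:Polynomial ℤ)^(cpke N π)
          + (2 * cnt π Odd) • (X:Polynomial ℤ)^(cpke N π)) else 0)
      + (if cpko N π + 1 = j then
          (C ((N:ℤ) - 2*(cnt π Even) - 2*(cnt π Odd)) * X^(cpke N π)
            + (2 * cnt π Even) • (X:Polynomial ℤ)^(cpke N π - 1)) else 0) := by
  classical
  have hNe : ¬ Even (N+1) := by simpa [Nat.not_even_iff_odd] using hN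
  set e := cnt π Even with he
  set o := cnt π Odd with ho
  have hnone : (if cpko (N+1) (insEquiv N (none, π)) = j
      then (X:Polynomial ℤ) ^ cpke (N+1) (insEquiv N (none, π)) else 0)
      = (if o = j then (X:Polynomial ℤ)^e else 0) := by
    rw [cpko_eq_cnt, cpke_eq_cnt, cnt_ins_none, cnt_ins_none, ← he, ← ho]
  have hvalB : ∀ b : Fin N, pk π b → Even ((b:ℕ)+1) →
      (if cpko (N+1) (insEquiv N (some b, π)) = j
        then (X:Polynomial ℤ) ^ cpke (N+1) (insEquiv N (some b, π)) else 0)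
      = (if o + 1 = j then (X:Polynomial ℤ)^(e-1) else 0) := by
    intro b hb hbe
    have h1 := cnt_ins_some_B Even π b hb
    rw [if_pos hbe, if_neg hNe, add_zero] at h1
    have h2 := cnt_ins_some_B Odd π b hb
    rw [if_neg (by simpa [Nat.not_odd_iff_even] using hbe), if_pos hN, add_zero] at h2
    rw [cpko_eq_cnt, cpke_eq_cnt, h2, (by omega : cnt (insEquiv N (some b, π)) Even = e - 1),
      ← ho]
  have hvalBo : ∀ b : Fin N, pk π b → ¬ Even ((b:ℕ)+1) →
      (if cpko (N+1) (insEquiv N (some b, π)) = j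
        then (X:Polynomial ℤ) ^ cpke (N+1) (insEquiv N (some b, π)) else 0)
      = (if o = j then (X:Polynomial ℤ)^e else 0) := by
    intro b hb hbe
    have h1 := cnt_ins_some_B Even π b hb
    rw [if_neg hbe, if_neg hNe, add_zero, add_zero] at h1
    have h2 := cnt_ins_some_B Odd π b hb
    rw [if_pos (Nat.not_even_iff_odd.mp hbe), if_pos hN] at h2
    rw [cpko_eq_cnt, cpke_eq_cnt, h1, (by omega : cnt (insEquiv N (some b, π)) Odd = o),
      ← he]
  have hvalC : ∀ b : Fin N, pk π (π.symm b) → Even ((π.symm b:ℕ)+1) →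
      (if cpko (N+1) (insEquiv N (some b, π)) = j
        then (X:Polynomial ℤ) ^ cpke (N+1) (insEquiv N (some b, π)) else 0)
      = (if o + 1 = j then (X:Polynomial ℤ)^(e-1) else 0) := by
    intro b hb hbe
    have h1 := cnt_ins_some_C Even π b hb
    rw [if_pos hbe, if_neg hNe, add_zero] at h1
    have h2 := cnt_ins_some_C Odd π b hb
    rw [if_neg (by simpa [Nat.not_odd_iff_even] using hbe), if_pos hN, add_zero] at h2
    rw [cpko_eq_cnt, cpke_eq_cnt, h2, (by omega : cnt (insEquiv N (some b, π)) Even = e - 1),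
      ← ho]
  have hvalCo : ∀ b : Fin N, pk π (π.symm b) → ¬ Even ((π.symm b:ℕ)+1) →
      (if cpko (N+1) (insEquiv N (some b, π)) = j
        then (X:Polynomial ℤ) ^ cpke (N+1) (insEquiv N (some b, π)) else 0)
      = (if o = j then (X:Polynomial ℤ)^e else 0) := by
    intro b hb hbe
    have h1 := cnt_ins_some_C Even π b hb
    rw [if_neg hbe, if_neg hNe, add_zero, add_zero] at h1
    have h2 := cnt_ins_some_C Odd π b hb
    rw [if_pos (Nat.not_even_iff_odd.mp hbe), if_pos hN] at h2
    rw [cpko_eq_cnt, cpke_eq_cnt, h1, (by omega : cnt (insEquiv N (some b, π)) Odd = o),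
      ← he]
  have hvalA : ∀ b : Fin N, ¬ pk π b → ¬ pk π (π.symm b) →
      (if cpko (N+1) (insEquiv N (some b, π)) = j
        then (X:Polynomial ℤ) ^ cpke (N+1) (insEquiv N (some b, π)) else 0)
      = (if o + 1 = j then (X:Polynomial ℤ)^e else 0) := by
    intro b hb ha
    have h1 := cnt_ins_some_A Even π b hb ha
    rw [if_neg hNe, zero_add] at h1
    have h2 := cnt_ins_some_A Odd π b hb ha
    rw [if_pos hN] at h2
    rw [cpko_eq_cnt, cpke_eq_cnt, h1, h2, ← he, ← ho, add_comm 1 o]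
  have nsmul_eq_C_mul : ∀ (n : ℕ) (q : Polynomial ℤ), n • q = C (n:ℤ) * q := by
    intro n q
    rw [nsmul_eq_mul]
    norm_cast
  have hsum : ∑ b : Fin N, (if cpko (N+1) (insEquiv N (some b, π)) = j
        then (X:Polynomial ℤ) ^ cpke (N+1) (insEquiv N (some b, π)) else 0)
      = (e • (if o + 1 = j then (X:Polynomial ℤ)^(e-1) else 0)
          + o • (if o = j then (X:Polynomial ℤ)^e else 0))
        + ((e • (if o + 1 = j then (X:Polynomial ℤ)^(e-1) else 0)
          + o • (if o = j then (X:Polynomial ℤ)^e else 0))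
        + ((Finset.univ.filter fun b : Fin N => ¬ pk π b ∧ ¬ pk π (π.symm b)).card
            • (if o + 1 = j then (X:Polynomial ℤ)^e else 0))) := by
    rw [← Finset.sum_filter_add_sum_filter_not Finset.univ (fun b => pk π b)]
    have hBe : ∑ b ∈ (Finset.univ.filter (fun b => pk π b)).filter
        (fun b : Fin N => Even ((b:ℕ)+1)), (if cpko (N+1) (insEquiv N (some b, π)) = j
          then (X:Polynomial ℤ) ^ cpke (N+1) (insEquiv N (some b, π)) else 0)
        = e • (if o + 1 = j then (X:Polynomial ℤ)^(e-1) else 0) := by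
      have hv : ∀ b ∈ (Finset.univ.filter (fun b => pk π b)).filter
          (fun b : Fin N => Even ((b:ℕ)+1)), (if cpko (N+1) (insEquiv N (some b, π)) = j
            then (X:Polynomial ℤ) ^ cpke (N+1) (insEquiv N (some b, π)) else 0)
          = (if o + 1 = j then (X:Polynomial ℤ)^(e-1) else 0) := by
        intro b hb
        simp only [Finset.mem_filter, Finset.mem_univ, true_and] at hb
        exact hvalB b hb.1 hb.2
      rw [Finset.sum_congr rfl hv, Finset.sum_const]
      congr 1
      rw [Finset.filter_filter, he]
      rfl
    have hBo : ∑ b ∈ (Finset.univ.filter (fun b => pk π b)).filter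
        (fun b : Fin N => ¬ Even ((b:ℕ)+1)), (if cpko (N+1) (insEquiv N (some b, π)) = j
          then (X:Polynomial ℤ) ^ cpke (N+1) (insEquiv N (some b, π)) else 0)
        = o • (if o = j then (X:Polynomial ℤ)^e else 0) := by
      have hv : ∀ b ∈ (Finset.univ.filter (fun b => pk π b)).filter
          (fun b : Fin N => ¬ Even ((b:ℕ)+1)), (if cpko (N+1) (insEquiv N (some b, π)) = j
            then (X:Polynomial ℤ) ^ cpke (N+1) (insEquiv N (some b, π)) else 0)
          = (if o = j then (X:Polynomial ℤ)^e else 0) := by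
        intro b hb
        simp only [Finset.mem_filter, Finset.mem_univ, true_and] at hb
        exact hvalBo b hb.1 hb.2
      rw [Finset.sum_congr rfl hv, Finset.sum_const]
      congr 1
      rw [Finset.filter_filter, ho]
      unfold cnt
      congr 1
      apply Finset.filter_congr
      intro b _
      rw [Nat.not_even_iff_odd]
    have hCe : ∑ b ∈ ((Finset.univ.filter (fun b => ¬ pk π b)).filter
          (fun b => pk π (π.symm b))).filter (fun b : Fin N => Even ((π.symm b : ℕ)+1)),
        (if cpko (N+1) (insEquiv N (some b, π)) = j
          then (X:Polynomial ℤ) ^ cpke (N+1) (insEquiv N (some b, π)) else 0)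
        = e • (if o + 1 = j then (X:Polynomial ℤ)^(e-1) else 0) := by
      have hv : ∀ b ∈ ((Finset.univ.filter (fun b => ¬ pk π b)).filter
          (fun b => pk π (π.symm b))).filter (fun b : Fin N => Even ((π.symm b : ℕ)+1)),
          (if cpko (N+1) (insEquiv N (some b, π)) = j
            then (X:Polynomial ℤ) ^ cpke (N+1) (insEquiv N (some b, π)) else 0)
          = (if o + 1 = j then (X:Polynomial ℤ)^(e-1) else 0) := by
        intro b hb
        simp only [Finset.mem_filter, Finset.mem_univ, true_and] at hb
        exact hvalC b hb.1.2 hb.2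
      rw [Finset.sum_congr rfl hv, Finset.sum_const]
      congr 1
      rw [Finset.filter_filter, Finset.filter_filter, he, ← card_classT π Even]
    have hCo : ∑ b ∈ ((Finset.univ.filter (fun b => ¬ pk π b)).filter
          (fun b => pk π (π.symm b))).filter (fun b : Fin N => ¬ Even ((π.symm b : ℕ)+1)),
        (if cpko (N+1) (insEquiv N (some b, π)) = j
          then (X:Polynomial ℤ) ^ cpke (N+1) (insEquiv N (some b, π)) else 0)
        = o • (if o = j then (X:Polynomial ℤ)^e else 0) := by
      have hv : ∀ b ∈ ((Finset.univ.filter (fun b => ¬ pk π b)).filter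
          (fun b => pk π (π.symm b))).filter (fun b : Fin N => ¬ Even ((π.symm b : ℕ)+1)),
          (if cpko (N+1) (insEquiv N (some b, π)) = j
            then (X:Polynomial ℤ) ^ cpke (N+1) (insEquiv N (some b, π)) else 0)
          = (if o = j then (X:Polynomial ℤ)^e else 0) := by
        intro b hb
        simp only [Finset.mem_filter, Finset.mem_univ, true_and] at hb
        exact hvalCo b hb.1.2 hb.2
      rw [Finset.sum_congr rfl hv, Finset.sum_const]
      congr 1
      rw [Finset.filter_filter, Finset.filter_filter, ho, ← card_classT π Odd]
      congr 1
      apply Finset.filter_congr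
      intro b _
      rw [Nat.not_even_iff_odd]
    have hA : ∑ b ∈ (Finset.univ.filter (fun b => ¬ pk π b)).filter
        (fun b => ¬ pk π (π.symm b)), (if cpko (N+1) (insEquiv N (some b, π)) = j
          then (X:Polynomial ℤ) ^ cpke (N+1) (insEquiv N (some b, π)) else 0)
        = (Finset.univ.filter fun b : Fin N => ¬ pk π b ∧ ¬ pk π (π.symm b)).card
            • (if o + 1 = j then (X:Polynomial ℤ)^e else 0) := by
      have hv : ∀ b ∈ (Finset.univ.filter (fun b => ¬ pk π b)).filter
          (fun b => ¬ pk π (π.symm b)), (if cpko (N+1) (insEquiv N (some b, π)) = j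
            then (X:Polynomial ℤ) ^ cpke (N+1) (insEquiv N (some b, π)) else 0)
          = (if o + 1 = j then (X:Polynomial ℤ)^e else 0) := by
        intro b hb
        simp only [Finset.mem_filter, Finset.mem_univ, true_and] at hb
        exact hvalA b hb.1 hb.2
      rw [Finset.sum_congr rfl hv, Finset.sum_const]
      congr 2
      rw [Finset.filter_filter]
    rw [← Finset.sum_filter_add_sum_filter_not
      (Finset.univ.filter (fun b => pk π b)) (fun b : Fin N => Even ((b:ℕ)+1)),
      ← Finset.sum_filter_add_sum_filter_not
      (Finset.univ.filter (fun b => ¬ pk π b)) (fun b => pk π (π.symm b)),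
      ← Finset.sum_filter_add_sum_filter_not
      ((Finset.univ.filter (fun b => ¬ pk π b)).filter (fun b => pk π (π.symm b)))
      (fun b : Fin N => Even ((π.symm b : ℕ)+1)),
      hBe, hBo, hCe, hCo, hA]
  rw [cpko_eq_cnt π, cpke_eq_cnt π, ← he, ← ho, hnone, hsum]
  have hR : (((Finset.univ.filter fun b : Fin N =>
      ¬ pk π b ∧ ¬ pk π (π.symm b)).card : ℕ) : ℤ) = (N:ℤ) - 2*e - 2*o := by
    have := card_classR π
    rw [← he, ← ho] at this
    push_cast
    omega
  by_cases h1 : o = j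
  · have h2 : ¬ (o + 1 = j) := by omega
    simp only [if_pos h1, if_neg h2, smul_zero, add_zero, zero_add]
    rw [nsmul_eq_C_mul, nsmul_eq_C_mul]
    push_cast [C_mul, C_add, C_sub, map_ofNat]
    ring
  · by_cases h2 : o + 1 = j
    · simp only [if_neg h1, if_pos h2, smul_zero, add_zero, zero_add]
      rw [nsmul_eq_C_mul _ ((X:Polynomial ℤ)^e), hR]
      rw [nsmul_eq_C_mul, nsmul_eq_C_mul]
      push_cast [C_mul, C_add, C_sub, map_ofNat]
      ring
    · simp only [if_neg h1, if_neg h2, smul_zero, add_zero, zero_add]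

end
section
variable {N : ℕ}
noncomputable def P (N j : ℕ) : Polynomial ℤ :=
  ∑ π ∈ Finset.univ.filter (fun π : Perm (Fin N) => cpko N π = j), X ^ cpke N π

lemma X_mul_deriv (e : ℕ) :
    (X:Polynomial ℤ) * derivative ((X:Polynomial ℤ)^e) = C (e:ℤ) * X^e := by
  cases e with
  | zero => simp
  | succ k =>
    rw [derivative_X_pow]
    simp only [Nat.add_sub_cancel]
    push_cast
    ring

lemma X2_mul_deriv (e : ℕ) :
    (X:Polynomial ℤ)^2 * derivative ((X:Polynomial ℤ)^e) = C (e:ℤ) * X^(e+1) := by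
  cases e with
  | zero => simp
  | succ k =>
    rw [derivative_X_pow]
    simp only [Nat.add_sub_cancel]
    push_cast
    ring

lemma nsmul_eq_C_mul' (n : ℕ) (q : Polynomial ℤ) : n • q = C (n:ℤ) * q := by
  rw [nsmul_eq_mul]
  norm_cast

/-- reindex `P (N+1) j` by the insertion equivalence and split into inner sums -/
lemma P_succ_eq (j : ℕ) :
    P (N+1) j = ∑ π : Perm (Fin N),
      ((if cpko (N+1) (insEquiv N (none, π)) = j
        then (X:Polynomial ℤ) ^ cpke (N+1) (insEquiv N (none, π)) else 0)
       + ∑ b : Fin N, (if cpko (N+1) (insEquiv N (some b, π)) = j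
        then (X:Polynomial ℤ) ^ cpke (N+1) (insEquiv N (some b, π)) else 0)) := by
  unfold P
  rw [Finset.sum_filter]
  rw [← Equiv.sum_comp (insEquiv N)
    (fun σ => if cpko (N+1) σ = j then (X:Polynomial ℤ) ^ cpke (N+1) σ else 0)]
  rw [Fintype.sum_prod_type]
  rw [Finset.sum_comm]
  apply Finset.sum_congr rfl
  intro π _
  rw [Fintype.sum_option (fun ob => if cpko (N+1) (insEquiv N (ob, π)) = j
    then (X:Polynomial ℤ) ^ cpke (N+1) (insEquiv N (ob, π)) else 0)]

lemma stepE (hN : Even (N+1)) (j : ℕ) :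
    P (N+1) j = P N j + 2 • ((X:Polynomial ℤ) * derivative (P N j))
      + C ((N:ℤ) - 2*j) * (X * P N j)
      - 2 • ((X:Polynomial ℤ)^2 * derivative (P N j))
      + C (2*(j:ℤ)+2) * (X * P N (j+1)) := by
  rw [P_succ_eq]
  rw [Finset.sum_congr rfl (fun π _ => innerE hN j π)]
  rw [Finset.sum_add_distrib]
  rw [← Finset.sum_filter, ← Finset.sum_filter]
  have h1 : ∑ π ∈ Finset.univ.filter (fun π : Perm (Fin N) => cpko N π = j),
      ((X:Polynomial ℤ)^(cpke N π) + (2 * cnt π Even) • (X:Polynomial ℤ)^(cpke N π)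
        + C ((N:ℤ) - 2*(cnt π Even) - 2*(cnt π Odd)) * X^(cpke N π + 1))
      = ∑ π ∈ Finset.univ.filter (fun π : Perm (Fin N) => cpko N π = j),
      ((X:Polynomial ℤ)^(cpke N π)
        + 2 • ((X:Polynomial ℤ) * derivative ((X:Polynomial ℤ)^(cpke N π)))
        + (C ((N:ℤ) - 2*j) * (X * (X:Polynomial ℤ)^(cpke N π))
          - 2 • ((X:Polynomial ℤ)^2 * derivative ((X:Polynomial ℤ)^(cpke N π))))) := by
    apply Finset.sum_congr rfl
    intro π hπ
    have ho : cnt π Odd = j := by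
      rw [← cpko_eq_cnt]
      exact (Finset.mem_filter.1 hπ).2
    rw [X_mul_deriv, X2_mul_deriv, nsmul_eq_C_mul', nsmul_eq_C_mul', nsmul_eq_C_mul', ho,
      ← cpke_eq_cnt]
    push_cast [C_mul, C_add, C_sub, C_1, map_ofNat]
    ring
  have h2 : ∑ π ∈ Finset.univ.filter (fun π : Perm (Fin N) => cpko N π = j + 1),
      (2*(cnt π Odd)) • (X:Polynomial ℤ)^(cpke N π + 1)
      = C (2*(j:ℤ)+2) * (X * P N (j+1)) := by
    unfold P
    rw [Finset.mul_sum, Finset.mul_sum]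
    apply Finset.sum_congr rfl
    intro π hπ
    have ho : cnt π Odd = j + 1 := by
      rw [← cpko_eq_cnt]
      exact (Finset.mem_filter.1 hπ).2
    rw [nsmul_eq_C_mul', ho]
    push_cast [C_mul, C_add, C_sub, C_1, map_ofNat]
    ring
  rw [h1, h2]
  rw [Finset.sum_add_distrib, Finset.sum_add_distrib, Finset.sum_sub_distrib,
    ← Finset.smul_sum, ← Finset.smul_sum, ← Finset.mul_sum, ← Finset.mul_sum,
    ← Finset.mul_sum, ← Finset.mul_sum, ← derivative_sum]
  unfold P
  ring

lemma stepO0 (hN : Odd (N+1)) : P (N+1) 0 = P N 0 := by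
  rw [P_succ_eq]
  rw [Finset.sum_congr rfl (fun π _ => innerO hN 0 π)]
  have hz : ∀ π : Perm (Fin N),
      (if cpko N π + 1 = 0 then
        (C ((N:ℤ) - 2*(cnt π Even) - 2*(cnt π Odd)) * X^(cpke N π)
          + (2 * cnt π Even) • (X:Polynomial ℤ)^(cpke N π - 1)) else 0) = 0 := by
    intro π
    rw [if_neg (by omega)]
  rw [Finset.sum_congr rfl (fun π _ => by rw [hz π, add_zero])]
  rw [← Finset.sum_filter]
  unfold P
  apply Finset.sum_congr rfl
  intro π hπ
  have ho : cnt π Odd = 0 := by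
    rw [← cpko_eq_cnt]
    exact (Finset.mem_filter.1 hπ).2
  rw [ho]
  simp

lemma stepO (hN : Odd (N+1)) (j : ℕ) :
    P (N+1) (j+1) = C (2*(j:ℤ)+3) * P N (j+1) + (C ((N:ℤ) - 2*j) * P N j
      + 2 • derivative (P N j) - 2 • ((X:Polynomial ℤ) * derivative (P N j))) := by
  rw [P_succ_eq]
  rw [Finset.sum_congr rfl (fun π _ => innerO hN (j+1) π)]
  rw [Finset.sum_add_distrib]
  rw [← Finset.sum_filter]
  have hcond : Finset.univ.filter (fun π : Perm (Fin N) => cpko N π + 1 = j + 1)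
      = Finset.univ.filter (fun π : Perm (Fin N) => cpko N π = j) := by
    apply Finset.filter_congr
    intro π _
    omega
  rw [← Finset.sum_filter, hcond]
  have h1 : ∑ π ∈ Finset.univ.filter (fun π : Perm (Fin N) => cpko N π = j + 1),
      ((X:Polynomial ℤ)^(cpke N π) + (2 * cnt π Odd) • (X:Polynomial ℤ)^(cpke N π))
      = C (2*(j:ℤ)+3) * P N (j+1) := by
    unfold P
    rw [Finset.mul_sum]
    apply Finset.sum_congr rfl
    intro π hπ
    have ho : cnt π Odd = j + 1 := by
      rw [← cpko_eq_cnt]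
      exact (Finset.mem_filter.1 hπ).2
    rw [nsmul_eq_C_mul', ho]
    push_cast [C_mul, C_add, C_sub, C_1, map_ofNat]
    ring
  have h2 : ∑ π ∈ Finset.univ.filter (fun π : Perm (Fin N) => cpko N π = j),
      (C ((N:ℤ) - 2*(cnt π Even) - 2*(cnt π Odd)) * X^(cpke N π)
        + (2 * cnt π Even) • (X:Polynomial ℤ)^(cpke N π - 1))
      = ∑ π ∈ Finset.univ.filter (fun π : Perm (Fin N) => cpko N π = j),
      (C ((N:ℤ) - 2*j) * (X:Polynomial ℤ)^(cpke N π)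
        + (2 • derivative ((X:Polynomial ℤ)^(cpke N π))
          - 2 • ((X:Polynomial ℤ) * derivative ((X:Polynomial ℤ)^(cpke N π))))) := by
    apply Finset.sum_congr rfl
    intro π hπ
    have ho : cnt π Odd = j := by
      rw [← cpko_eq_cnt]
      exact (Finset.mem_filter.1 hπ).2
    rw [X_mul_deriv, derivative_X_pow, nsmul_eq_C_mul', nsmul_eq_C_mul', nsmul_eq_C_mul', ho,
      ← cpke_eq_cnt]
    push_cast [C_mul, C_add, C_sub, C_1, map_ofNat]
    ring
  rw [h1, h2]
  rw [Finset.sum_add_distrib, Finset.sum_sub_distrib,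
    ← Finset.smul_sum, ← Finset.smul_sum, ← Finset.mul_sum, ← Finset.mul_sum,
    ← derivative_sum]
  unfold P
  ring
end
/-- `f` is a symmetric polynomial with coefficients mirrored around `m/2`
(degree ≤ m and coeff i = coeff (m-i)). -/
def Symm (m : ℕ) (f : Polynomial ℤ) : Prop :=
  (∀ i, m < i → f.coeff i = 0) ∧ ∀ i ≤ m, f.coeff i = f.coeff (m - i)

lemma symm_zero (m : ℕ) : Symm m 0 := by
  constructor <;> intro i _ <;> simp

lemma symm_add {m : ℕ} {f g : Polynomial ℤ} (hf : Symm m f) (hg : Symm m g) :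
    Symm m (f + g) := by
  constructor
  · intro i hi
    rw [coeff_add, hf.1 i hi, hg.1 i hi, add_zero]
  · intro i hi
    rw [coeff_add, coeff_add, hf.2 i hi, hg.2 i hi]

lemma symm_C_mul {m : ℕ} (c : ℤ) {f : Polynomial ℤ} (hf : Symm m f) : Symm m (C c * f) := by
  constructor
  · intro i hi
    rw [coeff_C_mul, hf.1 i hi, mul_zero]
  · intro i hi
    rw [coeff_C_mul, coeff_C_mul, hf.2 i hi]

lemma symm_X_shift {m : ℕ} {f : Polynomial ℤ} (hf : Symm m f) : Symm (m + 2) (X * f) := by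
  constructor
  · intro i hi
    cases i with
    | zero => omega
    | succ k =>
      rw [coeff_X_mul]
      exact hf.1 k (by omega)
  · intro i hi
    cases i with
    | zero =>
      rw [Polynomial.mul_coeff_zero, coeff_X_zero, zero_mul]
      have h2 : m + 2 - 0 = (m + 1) + 1 := by omega
      rw [h2, coeff_X_mul, hf.1 (m+1) (by omega)]
    | succ k =>
      rw [coeff_X_mul]
      rcases Nat.lt_or_ge k (m + 1) with h | h
      · have h2 : m + 2 - (k+1) = (m - k) + 1 := by omega
        rw [h2, coeff_X_mul]
        exact hf.2 k (by omega)
      · -- k+1 = m+2, both ends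
        have hk : k = m + 1 := by omega
        subst hk
        have h2 : m + 2 - (m + 2) = 0 := by omega
        rw [h2, Polynomial.mul_coeff_zero, coeff_X_zero, zero_mul]
        exact hf.1 (m+1) (by omega)

lemma symm_const_derivative {f : Polynomial ℤ} (hf : Symm 0 f) : derivative f = 0 := by
  ext k
  rw [coeff_derivative, hf.1 (k+1) (by omega), zero_mul, coeff_zero]

lemma coeff_X_mul_deriv (f : Polynomial ℤ) (k : ℕ) :
    ((X:Polynomial ℤ) * derivative f).coeff k = f.coeff k * k := by
  cases k with
  | zero => simp [Polynomial.mul_coeff_zero]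
  | succ j => rw [coeff_X_mul, coeff_derivative]; push_cast; ring

lemma coeff_X2_mul_deriv (f : Polynomial ℤ) (k : ℕ) :
    ((X:Polynomial ℤ)^2 * derivative f).coeff (k+1) = f.coeff k * k := by
  cases k with
  | zero =>
    rw [pow_two, mul_assoc, coeff_X_mul, Polynomial.mul_coeff_zero, coeff_X_zero, zero_mul]
    simp
  | succ j =>
    have h2 : j + 1 + 1 = j + 2 := by omega
    rw [h2, coeff_X_pow_mul (derivative f) 2 j, coeff_derivative]
    push_cast
    ring

/-- the even-step operator preserves symmetry, moving the center up by 1/2 -/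
lemma symm_T {m : ℕ} {f : Polynomial ℤ} (hf : Symm m f) :
    Symm (m + 1) (f + 2 • ((X:Polynomial ℤ) * derivative f)
      + C (2*(m:ℤ)+1) * (X * f) - 2 • ((X:Polynomial ℤ)^2 * derivative f)) := by
  set g := f + 2 • ((X:Polynomial ℤ) * derivative f)
      + C (2*(m:ℤ)+1) * (X * f) - 2 • ((X:Polynomial ℤ)^2 * derivative f) with hg
  have hc0 : g.coeff 0 = f.coeff 0 := by
    rw [hg]
    simp only [coeff_sub, coeff_add, coeff_smul, coeff_C_mul,
      Polynomial.mul_coeff_zero, coeff_X_zero, coeff_X_pow, coeff_X_mul_deriv]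
    norm_num
  have hcs : ∀ k, g.coeff (k+1)
      = (3 + 2*(k:ℤ)) * f.coeff (k+1) + (2*(m:ℤ) + 1 - 2*k) * f.coeff k := by
    intro k
    rw [hg]
    simp only [coeff_sub, coeff_add, coeff_smul, coeff_C_mul,
      coeff_X_mul, coeff_X_mul_deriv, coeff_X2_mul_deriv, coeff_derivative]
    push_cast
    ring
  constructor
  · intro i hi
    cases i with
    | zero => omega
    | succ k =>
      rw [hcs k, hf.1 (k+1) (by omega), hf.1 k (by omega)]
      ring
  · intro i hi
    cases i with
    | zero =>
      rw [Nat.sub_zero, hc0, hcs m, hf.1 (m+1) (by omega)]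
      have h0 := hf.2 0 (by omega)
      rw [Nat.sub_zero] at h0
      rw [h0]
      ring
    | succ k =>
      rcases Nat.lt_or_ge (k+1) (m+1) with h | h
      · -- 1 ≤ k+1 ≤ m : interior
        have h2 : m + 1 - (k+1) = (m - k - 1) + 1 := by omega
        rw [hcs k, h2, hcs (m - k - 1)]
        have e1 : f.coeff (k+1) = f.coeff (m - k - 1) := by
          have := hf.2 (k+1) (by omega)
          rwa [(by omega : m - (k+1) = m - k - 1)] at this
        have e2 : f.coeff k = f.coeff (m - k - 1 + 1) := by
          have := hf.2 k (by omega)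
          rwa [(by omega : m - k = m - k - 1 + 1)] at this
        rw [e1, e2]
        have hc : ((m - k - 1 : ℕ) : ℤ) = (m:ℤ) - k - 1 := by omega
        rw [hc]
        ring
      · -- k+1 = m+1 : top coefficient vs bottom
        have hk : k = m := by omega
        rw [hcs k, (by omega : m + 1 - (k+1) = 0), hc0, hk, hf.1 (m+1) (by omega)]
        have h0 := hf.2 0 (by omega)
        rw [Nat.sub_zero] at h0
        rw [h0]
        ring

/-- the odd-step operator preserves symmetry, moving the center down by 1/2 -/
lemma symm_U {m : ℕ} {f : Polynomial ℤ} (hf : Symm (m+1) f) :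
    Symm m (C (2*(m:ℤ)+2) * f + 2 • derivative f - 2 • ((X:Polynomial ℤ) * derivative f)) := by
  set g := C (2*(m:ℤ)+2) * f + 2 • derivative f - 2 • ((X:Polynomial ℤ) * derivative f) with hg
  have hcs : ∀ k, g.coeff k
      = (2*(m:ℤ) + 2 - 2*k) * f.coeff k + (2*(k:ℤ) + 2) * f.coeff (k+1) := by
    intro k
    rw [hg]
    simp only [coeff_sub, coeff_add, coeff_smul, coeff_C_mul, coeff_derivative,
      coeff_X_mul_deriv]
    push_cast
    ring
  constructor
  · intro i hi
    rcases Nat.lt_or_ge (m+1) i with h | h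
    · rw [hcs i, hf.1 i (by omega), hf.1 (i+1) (by omega)]
      ring
    · -- i = m+1
      have hk : i = m + 1 := by omega
      subst hk
      rw [hcs (m+1), hf.1 (m+2) (by omega)]
      push_cast
      ring
  · intro i hi
    rw [hcs i, hcs (m - i)]
    have e1 : f.coeff i = f.coeff (m - i + 1) := by
      have := hf.2 i (by omega)
      rwa [(by omega : m + 1 - i = m - i + 1)] at this
    have e2 : f.coeff (i+1) = f.coeff (m - i) := by
      have := hf.2 (i+1) (by omega)
      rwa [(by omega : m + 1 - (i+1) = m - i)] at this
    rw [e1, e2]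
    have hc : ((m - i : ℕ) : ℤ) = (m:ℤ) - i := by omega
    rw [hc]
    ring

section
variable {N : ℕ}

lemma P_zero_zero : P 0 0 = 1 := by
  unfold P
  have h1 : ∀ π : Perm (Fin 0), cpko 0 π = 0 := by
    intro π
    simp [cpko]
  have h2 : ∀ π : Perm (Fin 0), cpke 0 π = 0 := by
    intro π
    simp [cpke]
  rw [Finset.filter_true_of_mem (fun π _ => h1 π)]
  rw [Finset.sum_congr rfl (fun π _ => by rw [h2 π, pow_zero])]
  rw [Finset.sum_const, Finset.card_univ]
  simp

lemma P_zero_pos (j : ℕ) : P 0 (j+1) = 0 := by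
  unfold P
  have h1 : ∀ π : Perm (Fin 0), cpko 0 π = 0 := by
    intro π
    simp [cpko]
  rw [Finset.filter_false_of_mem (fun π _ => by rw [h1 π]; omega), Finset.sum_empty]

theorem inv_main (N : ℕ) :
    ∀ j, Symm (N/2 - j) (P N j) ∧ (N < 2*j → P N j = 0) := by
  induction N with
  | zero =>
    intro j
    cases j with
    | zero =>
      refine ⟨?_, by omega⟩
      rw [P_zero_zero]
      constructor
      · intro i hi
        simp only [Nat.zero_div, Nat.zero_sub] at hi
        rw [Polynomial.coeff_one, if_neg (by omega)]
      · intro i hi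
        simp only [Nat.zero_div, Nat.zero_sub] at hi ⊢
        have h0 : i = 0 := by omega
        subst h0
        rfl

    | succ k =>
      rw [P_zero_pos k]
      exact ⟨symm_zero _, fun _ => rfl⟩
  | succ N IH =>
    intro j
    rcases Nat.even_or_odd (N+1) with hN | hN
    · -- even step: N odd
      have hpar : N % 2 = 1 := by
        rcases hN with ⟨t, ht⟩
        omega
      have hzero : ∀ j', N < 2 * j' → P (N+1) j' = 0 := by
        intro j' h
        rw [stepE hN j', (IH j').2 (by omega), (IH (j'+1)).2 (by omega)]
        simp
      refine ⟨?_, fun h => hzero j (by omega)⟩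
      rcases le_or_gt j (N/2) with hj | hj
      · have hcoef : (N:ℤ) - 2*j = 2*((N/2 - j : ℕ):ℤ)+1 := by omega
        have hcenter : (N+1)/2 - j = (N/2 - j) + 1 := by omega
        rw [stepE hN j, hcoef, hcenter]
        apply symm_add (symm_T (IH j).1)
        rcases Nat.lt_or_ge j (N/2) with hj2 | hj2
        · have h1 := symm_C_mul (2*(j:ℤ)+2) (symm_X_shift (IH (j+1)).1)
          have hc2 : N/2 - (j+1) + 2 = (N/2 - j) + 1 := by omega
          rwa [hc2] at h1
        · -- j = N/2 : the (j+1) part vanishes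
          rw [(IH (j+1)).2 (by omega)]
          simpa using symm_zero (N/2 - j + 1)
      · rw [hzero j (by omega)]
        exact symm_zero _
    · -- odd step: N even
      have hpar : N % 2 = 0 := by
        rcases hN with ⟨t, ht⟩
        omega
      have hzero : ∀ j', N + 1 < 2 * j' → P (N+1) j' = 0 := by
        intro j' h
        cases j' with
        | zero => omega
        | succ k =>
          rw [stepO hN k, (IH (k+1)).2 (by omega)]
          rcases Nat.lt_or_ge (N/2) k with hk | hk
          · rw [(IH k).2 (by omega)]
            simp
          · -- k = N/2
            have hk2 : k = N/2 := by omega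
            have hconst := symm_const_derivative (f := P N k) (by
              have := (IH k).1
              rwa [(by omega : N/2 - k = 0)] at this)
            have hc0 : ((N:ℤ) - 2*k) = 0 := by omega
            rw [hconst, hc0]
            simp
      refine ⟨?_, fun h => hzero j h⟩
      cases j with
      | zero =>
        rw [stepO0 hN, (by omega : (N+1)/2 - 0 = N/2 - 0)]
        exact (IH 0).1
      | succ j' =>
        rcases le_or_gt (j'+1) (N/2) with hj | hj
        · have hcenter : (N+1)/2 - (j'+1) = N/2 - (j'+1) := by omega
          have hcoef : (N:ℤ) - 2*j' = 2*((N/2 - (j'+1) : ℕ):ℤ)+2 := by omega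
          rw [stepO hN j', hcenter, hcoef]
          apply symm_add (symm_C_mul _ (IH (j'+1)).1)
          have hf : Symm ((N/2 - (j'+1)) + 1) (P N j') := by
            have := (IH j').1
            rwa [(by omega : N/2 - j' = (N/2 - (j'+1)) + 1)] at this
          exact symm_U hf
        · rw [hzero (j'+1) (by omega)]
          exact symm_zero _

lemma coeff0_P (N : ℕ) : (P N 0).coeff 0 = 1 := by
  induction N with
  | zero => rw [P_zero_zero]; simp
  | succ N IH =>
    rcases Nat.even_or_odd (N+1) with hN | hN
    · rw [stepE hN 0]
      simp only [coeff_add, coeff_sub, Polynomial.coeff_smul, coeff_C_mul,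
        Polynomial.mul_coeff_zero, coeff_X_zero, coeff_X_pow, zero_mul, mul_zero,
        smul_zero, add_zero, sub_zero]
      norm_num
      exact IH
    · rw [stepO0 hN]
      exact IH

end
end

end JoddProof

/-- For every `n ≥ 0`, the polynomial `J_{2n+1}(x)` has degree `n` and is symmetric:
its coefficients satisfy `c_i = c_{n-i}` for all `0 ≤ i ≤ n`. -/
theorem stmt0 (n : ℕ) :
    (Jodd n).natDegree = n ∧ ∀ i ≤ n, (Jodd n).coeff i = (Jodd n).coeff (n - i) := by
  have hJP : Jodd n = JoddProof.P (2*n+1) 0 := rfl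
  have hs := (JoddProof.inv_main (2*n+1) 0).1
  rw [(by omega : (2*n+1)/2 - 0 = n)] at hs
  have hc0 : (Jodd n).coeff 0 = 1 := by rw [hJP]; exact JoddProof.coeff0_P (2*n+1)
  have hcn : (Jodd n).coeff n = 1 := by
    rw [hJP] at hc0 ⊢
    rw [hs.2 n (le_refl n), Nat.sub_self]
    exact hc0
  constructor
  · apply le_antisymm
    · rw [Polynomial.natDegree_le_iff_coeff_eq_zero]
      intro m hm
      rw [hJP]
      exact hs.1 m hm
    · apply Polynomial.le_natDegree_of_ne_zero
      rw [hcn]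
      exact one_ne_zero
  · intro i hi
    rw [hJP]
    exact hs.2 i hi
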